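/- Let n be a positive even integer. The map pcoc : (ℝⁿ)^{n+1} → {−1,0,1} satisfies: (i) pcoc(v_0,…,λv_j,…,v_n) = pcoc(v_0,…,v_n) for every j and every nonzero scalar λ (so pcoc descends to a map on (ℙ(ℝⁿ))^{n+1}); (ii) pcoc is alternating, i.e. pcoc(v_{σ(0)},…,v_{σ(n)}) = sign(σ)·pcoc(v_0,…,v_n) for every permutation σ of {0,…,n}; (iii) pcoc(g v_0,…,g v_n) = ε(g)·pcoc(v_0,…,v_n) for every g ∈ GL_n(ℝ), where ε(g) is the sign of det g. -/

import Mathlib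

open Matrix

noncomputable section

/-- Sign of the determinant of the matrix whose columns are `v 0, …, v (n-1)`
(zero if they do not form a basis). -/
def oriV {n : ℕ} (v : Fin n → (Fin n → ℝ)) : ℝ :=
  Real.sign (Matrix.det (Matrix.of fun i j => v j i))

/-- `pcoc(v_0,…,v_n) = ∏_{i=0}^{n} ori(v_0,…,v̂_i,…,v_n)`. -/
def pcoc {n : ℕ} (v : Fin (n + 1) → (Fin n → ℝ)) : ℝ :=
  ∏ i : Fin (n + 1), oriV (v ∘ i.succAbove)

/-- Sign of the determinant of `g`. -/
def eps {n : ℕ} (g : GL (Fin n) ℝ) : ℝ :=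
  Real.sign ((g : Matrix (Fin n) (Fin n) ℝ).det)

/- ### Auxiliary lemmas -/

lemma real_sign_mul (a b : ℝ) : Real.sign (a * b) = Real.sign a * Real.sign b := by
  rcases lt_trichotomy a 0 with ha | rfl | ha
  · rcases lt_trichotomy b 0 with hb | rfl | hb
    · rw [Real.sign_of_pos (mul_pos_of_neg_of_neg ha hb), Real.sign_of_neg ha,
        Real.sign_of_neg hb]; ring
    · simp [Real.sign_zero]
    · rw [Real.sign_of_neg (mul_neg_of_neg_of_pos ha hb), Real.sign_of_neg ha,
        Real.sign_of_pos hb]; ring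
  · simp [Real.sign_zero]
  · rcases lt_trichotomy b 0 with hb | rfl | hb
    · rw [Real.sign_of_neg (mul_neg_of_pos_of_neg ha hb), Real.sign_of_pos ha,
        Real.sign_of_neg hb]; ring
    · simp [Real.sign_zero]
    · rw [Real.sign_of_pos (mul_pos ha hb), Real.sign_of_pos ha, Real.sign_of_pos hb]; ring

lemma sign_pow_even {s : ℝ} (h : s = -1 ∨ s = 1) {m : ℕ} (hm : Even m) : s ^ m = 1 := by
  obtain ⟨k, rfl⟩ := hm
  have hss : s * s = 1 := by rcases h with rfl | rfl <;> norm_num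
  rw [pow_add, ← mul_pow, hss, one_pow]

/-- Permuting the columns multiplies `oriV` by the sign of the permutation. -/
lemma oriV_comp_perm {n : ℕ} (w : Fin n → Fin n → ℝ) (τ : Equiv.Perm (Fin n)) :
    oriV (w ∘ τ) = ((Equiv.Perm.sign τ : ℤ) : ℝ) * oriV w := by
  have h : (Matrix.of fun i j => (w ∘ τ) j i)
      = (Matrix.of fun i j => w j i).submatrix id τ := rfl
  rw [oriV, h, Matrix.det_permute', real_sign_mul, oriV]
  congr 1
  rcases Int.units_eq_one_or (Equiv.Perm.sign τ) with h1 | h1 <;> rw [h1] <;>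
    simp [Real.sign_one, Real.sign_neg]

/-- The permutation of `Fin n` induced by `σ` between the complement of `i`
and the complement of `σ i`. -/
def tperm {n : ℕ} (σ : Equiv.Perm (Fin (n + 1))) (i : Fin (n + 1)) : Equiv.Perm (Fin n) :=
  Equiv.removeNone ((finSuccEquiv' i).symm.trans (σ.trans (finSuccEquiv' (σ i))))

lemma tperm_spec {n : ℕ} (σ : Equiv.Perm (Fin (n + 1))) (i : Fin (n + 1)) (j : Fin n) :
    (σ i).succAbove (tperm σ i j) = σ (i.succAbove j) := by
  set π : Equiv.Perm (Option (Fin n)) :=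
    (finSuccEquiv' i).symm.trans (σ.trans (finSuccEquiv' (σ i))) with hπ
  have hj : π (some j) = finSuccEquiv' (σ i) (σ (i.succAbove j)) := by
    simp [hπ, Equiv.trans_apply]
  have hne : σ (i.succAbove j) ≠ σ i := σ.injective.ne (Fin.succAbove_ne i j)
  obtain ⟨k, hk⟩ := Fin.exists_succAbove_eq hne
  have hsome : π (some j) = some k := by rw [hj, ← hk, finSuccEquiv'_succAbove]
  have h2 : some (Equiv.removeNone π j) = π (some j) := Equiv.removeNone_some π ⟨k, hsome⟩
  rw [hsome] at h2
  have h3 : tperm σ i j = k := Option.some_injective _ h2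
  rw [h3, hk]

/-- Auxiliary sign attached to `a : Fin (n+1)`. -/
def sAux {n : ℕ} (a : Fin (n + 1)) : ℤˣ :=
  Equiv.Perm.sign (((finSuccEquiv' a).symm.trans (finSuccEquiv' 0) :
    Equiv.Perm (Option (Fin n))))

lemma sign_trans_aux {n : ℕ} (a b : Fin (n + 1)) :
    Equiv.Perm.sign (((finSuccEquiv' a).symm.trans (finSuccEquiv' b) :
      Equiv.Perm (Option (Fin n)))) = sAux a * sAux b := by
  have h1 : (((finSuccEquiv' a).symm.trans (finSuccEquiv' b)) : Equiv.Perm (Option (Fin n)))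
      = (((finSuccEquiv' b).symm.trans (finSuccEquiv' 0) : Equiv.Perm (Option (Fin n))))⁻¹
        * (((finSuccEquiv' a).symm.trans (finSuccEquiv' 0) : Equiv.Perm (Option (Fin n)))) := by
    ext x
    simp [Equiv.Perm.mul_apply, Equiv.Perm.inv_def, Equiv.symm_trans_apply, Equiv.trans_apply]
  rw [h1, Equiv.Perm.sign_mul, Equiv.Perm.sign_inv, sAux, sAux]
  exact mul_comm _ _

lemma tperm_sign {n : ℕ} (σ : Equiv.Perm (Fin (n + 1))) (i : Fin (n + 1)) :
    Equiv.Perm.sign (tperm σ i) = Equiv.Perm.sign σ * (sAux i * sAux (σ i)) := by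
  set π : Equiv.Perm (Option (Fin n)) :=
    (finSuccEquiv' i).symm.trans (σ.trans (finSuccEquiv' (σ i))) with hπ
  have hnone : π none = none := by simp [hπ, Equiv.trans_apply]
  have htp : tperm σ i = Equiv.removeNone π := rfl
  have h1 : Equiv.Perm.sign (tperm σ i) = Equiv.Perm.sign π := by
    rw [← Equiv.optionCongr_sign, htp, map_equiv_removeNone, hnone]
    simp [Equiv.swap_self]
  have h2 : π = (((finSuccEquiv' (σ i)).symm.trans (σ.trans (finSuccEquiv' (σ i)))) :
        Equiv.Perm (Option (Fin n)))
      * (((finSuccEquiv' i).symm.trans (finSuccEquiv' (σ i))) :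
        Equiv.Perm (Option (Fin n))) := by
    ext x
    simp [hπ, Equiv.Perm.mul_apply, Equiv.symm_trans_apply, Equiv.trans_apply]
  have h3 : ((((finSuccEquiv' (σ i)).symm.trans (σ.trans (finSuccEquiv' (σ i))))) :
      Equiv.Perm (Option (Fin n)))
      = ((finSuccEquiv' (σ i)).symm.trans σ).trans (finSuccEquiv' (σ i)) := by
    ext x; simp [Equiv.trans_apply]
  rw [h1, h2, Equiv.Perm.sign_mul, h3, Equiv.Perm.sign_symm_trans_trans, sign_trans_aux]

lemma prod_tperm_sign {n : ℕ} (he : Even n) (σ : Equiv.Perm (Fin (n + 1))) :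
    ∏ i : Fin (n + 1), Equiv.Perm.sign (tperm σ i) = Equiv.Perm.sign σ := by
  have hu : ∀ u : ℤˣ, u * u = 1 := fun u => by
    rcases Int.units_eq_one_or u with h | h <;> rw [h] <;> decide
  have hpow : ∀ u : ℤˣ, u ^ n = 1 := fun u => by
    obtain ⟨k, hk⟩ := he
    rw [hk, pow_add, ← mul_pow, hu, one_pow]
  have h1 : ∏ i : Fin (n + 1), Equiv.Perm.sign (tperm σ i)
      = ∏ i : Fin (n + 1), (Equiv.Perm.sign σ * (sAux i * sAux (σ i))) :=
    Finset.prod_congr rfl fun i _ => tperm_sign σ i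
  rw [h1, Finset.prod_mul_distrib, Finset.prod_const, Finset.prod_mul_distrib,
    Equiv.prod_comp σ (fun a => sAux a), hu, mul_one, Finset.card_univ, Fintype.card_fin,
    pow_succ, hpow, one_mul]

/- ### The theorem -/

/-- (i) `pcoc` is invariant under scaling any single entry by a nonzero
scalar (hence descends to projective space); (ii) `pcoc` is alternating;
(iii) `pcoc` is `GL_n(ℝ)`-equivariant with values in the sign module `ℝ_ε`. -/
theorem stmt5 (n : ℕ) (hn : 0 < n) (he : Even n) :
    (∀ (v : Fin (n + 1) → (Fin n → ℝ)) (j : Fin (n + 1)) (lam : ℝ), lam ≠ 0 →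
      pcoc (Function.update v j (lam • v j)) = pcoc v) ∧
    (∀ (v : Fin (n + 1) → (Fin n → ℝ)) (σ : Equiv.Perm (Fin (n + 1))),
      pcoc (v ∘ σ) = ((Equiv.Perm.sign σ : ℤ) : ℝ) * pcoc v) ∧
    (∀ (v : Fin (n + 1) → (Fin n → ℝ)) (g : GL (Fin n) ℝ),
      pcoc (fun i => (g : Matrix (Fin n) (Fin n) ℝ) *ᵥ v i) = eps g * pcoc v) := by
  refine ⟨?_, ?_, ?_⟩
  · -- (i) scaling invariance
    intro v j lam hlam
    have hfac : ∀ i : Fin (n + 1),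
        oriV (Function.update v j (lam • v j) ∘ i.succAbove)
          = (if i = j then 1 else Real.sign lam) * oriV (v ∘ i.succAbove) := by
      intro i
      by_cases hij : i = j
      · subst hij
        rw [if_pos rfl, one_mul]
        congr 1
        funext k
        simp [Function.comp, Function.update_of_ne (Fin.succAbove_ne i k)]
      · rw [if_neg hij]
        have hji : j ≠ i := fun h => hij h.symm
        obtain ⟨c₀, hc₀⟩ := Fin.exists_succAbove_eq hji
        set M : Matrix (Fin n) (Fin n) ℝ := Matrix.of fun r c => v (i.succAbove c) r with hM
        have hN : (Matrix.of fun r c =>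
              (Function.update v j (lam • v j) ∘ i.succAbove) c r)
            = M.updateCol c₀ (lam • fun r => v j r) := by
          ext r c
          by_cases hc : c = c₀
          · subst hc
            simp [Matrix.updateCol_apply, hc₀, Function.comp]
          · have hne : i.succAbove c ≠ j := by
              rw [← hc₀]
              exact fun h => hc (Fin.succAbove_right_injective h)
            simp [Matrix.updateCol_apply, hc, Function.comp,
              Function.update_of_ne hne, hM]
        rw [oriV, hN, Matrix.det_updateCol_smul]
        have hMc : M.updateCol c₀ (fun r => v j r) = M := by
          have hcol : (fun r => v j r) = fun r => M r c₀ := by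
            funext r; simp [hM, hc₀]
          rw [hcol, Matrix.updateCol_eq_self]
        rw [hMc, real_sign_mul, oriV]
        rfl
    rw [pcoc, pcoc, Finset.prod_congr rfl fun i _ => hfac i, Finset.prod_mul_distrib]
    have hprod : ∏ i : Fin (n + 1), (if i = j then (1 : ℝ) else Real.sign lam)
        = Real.sign lam ^ n := by
      rw [← Finset.mul_prod_erase Finset.univ _ (Finset.mem_univ j), if_pos rfl, one_mul,
        Finset.prod_congr rfl (fun i hi => if_neg (Finset.ne_of_mem_erase hi)),
        Finset.prod_const, Finset.card_erase_of_mem (Finset.mem_univ j),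
        Finset.card_univ, Fintype.card_fin, Nat.add_sub_cancel]
    rw [hprod, sign_pow_even (Real.sign_apply_eq_of_ne_zero lam hlam) he, one_mul]
  · -- (ii) alternating
    intro v σ
    have hfac : ∀ i : Fin (n + 1), oriV ((v ∘ σ) ∘ i.succAbove)
        = ((Equiv.Perm.sign (tperm σ i) : ℤ) : ℝ) * oriV (v ∘ (σ i).succAbove) := by
      intro i
      have hcomp : (v ∘ σ) ∘ i.succAbove = (v ∘ (σ i).succAbove) ∘ (tperm σ i) := by
        funext j
        simp [Function.comp, tperm_spec]
      rw [hcomp, oriV_comp_perm]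
    rw [pcoc, pcoc, Finset.prod_congr rfl fun i _ => hfac i, Finset.prod_mul_distrib]
    congr 1
    · set φ : ℤˣ →* ℝ := (Int.castRingHom ℝ).toMonoidHom.comp (Units.coeHom ℤ) with hφ
      have : ∏ i : Fin (n + 1), ((Equiv.Perm.sign (tperm σ i) : ℤ) : ℝ)
          = φ (∏ i : Fin (n + 1), Equiv.Perm.sign (tperm σ i)) := by
        rw [map_prod]; rfl
      rw [this, prod_tperm_sign he σ]; rfl
    · exact Equiv.prod_comp σ (fun a => oriV (v ∘ a.succAbove))
  · -- (iii) GL-equivariance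
    intro v g
    have hfac : ∀ i : Fin (n + 1),
        oriV ((fun k => (g : Matrix (Fin n) (Fin n) ℝ) *ᵥ v k) ∘ i.succAbove)
          = eps g * oriV (v ∘ i.succAbove) := by
      intro i
      have hmat : (Matrix.of fun r c =>
            ((fun k => (g : Matrix (Fin n) (Fin n) ℝ) *ᵥ v k) ∘ i.succAbove) c r)
          = (g : Matrix (Fin n) (Fin n) ℝ) * (Matrix.of fun r c => (v ∘ i.succAbove) c r) := by
        ext r c
        simp [Matrix.mul_apply, Matrix.mulVec, dotProduct, Function.comp]
      rw [oriV, hmat, Matrix.det_mul, real_sign_mul, eps, oriV]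
    rw [pcoc, pcoc, Finset.prod_congr rfl fun i _ => hfac i, Finset.prod_mul_distrib,
      Finset.prod_const, Finset.card_univ, Fintype.card_fin]
    have hd : (↑g : Matrix (Fin n) (Fin n) ℝ).det ≠ 0 :=
      (Matrix.isUnits_det_units g).ne_zero
    have heps : eps g = -1 ∨ eps g = 1 := Real.sign_apply_eq_of_ne_zero _ hd
    rw [pow_succ, sign_pow_even heps he, one_mul]

end
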